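/- Let p and q be continuous, everywhere-positive probability densities on ℝ with CDFs F_p, F_q, density quantile functions fQ_p(u) = p(F_p⁻¹(u)) and fQ_q(u) = q(F_q⁻¹(u)), and let T = F_q⁻¹ ∘ F_p. Suppose there exist shape parameters β_p, β_q ∈ [0,1] and constants c_p, c_q ∈ (0, ∞) with lim_{u→1⁻} fQ_p(u) / [(1−u)·(log(1/(1−u)))^{1−β_p}] = c_p and lim_{u→1⁻} fQ_q(u) / [(1−u)·(log(1/(1−u)))^{1−β_q}] = c_q. Then lim_{z→∞} T'(z)·(log(1/(1−F_p(z))))^{β_p−β_q} = c_p/c_q. -/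

import Mathlib

open MeasureTheory Filter Topology Set

section Aux

variable {p : ℝ → ℝ}

lemma dens_integrable (hc : Continuous p) (hpos : ∀ z, 0 < p z)
    (hprob : ∫⁻ z, ENNReal.ofReal (p z) = 1) : Integrable p := by
  refine ⟨hc.aestronglyMeasurable, ?_⟩
  rw [HasFiniteIntegral]
  have h : ∀ z, ‖p z‖ₑ = ENNReal.ofReal (p z) := fun z =>
    Real.enorm_eq_ofReal (hpos z).le
  rw [lintegral_congr h, hprob]
  exact ENNReal.one_lt_top

lemma dens_total (hc : Continuous p) (hpos : ∀ z, 0 < p z)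
    (hprob : ∫⁻ z, ENNReal.ofReal (p z) = 1) : (∫ z, p z) = 1 := by
  rw [integral_eq_lintegral_of_nonneg_ae (Eventually.of_forall fun z => (hpos z).le)
    hc.aestronglyMeasurable, hprob, ENNReal.toReal_one]

lemma dens_F_mono (hc : Continuous p) (hpos : ∀ z, 0 < p z)
    (hprob : ∫⁻ z, ENNReal.ofReal (p z) = 1) :
    StrictMono (fun z => ∫ t in Iic z, p t) := by
  have hint := dens_integrable hc hpos hprob
  intro a b hab
  have h1 : (∫ t in Iic b, p t) - ∫ t in Iic a, p t = ∫ t in a..b, p t :=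
    intervalIntegral.integral_Iic_sub_Iic hint.integrableOn hint.integrableOn
  have h2 : 0 < ∫ t in a..b, p t :=
    intervalIntegral.intervalIntegral_pos_of_pos_on (hc.intervalIntegrable _ _)
      (fun x _ => hpos x) hab
  simp only; linarith

lemma dens_F_mem (hc : Continuous p) (hpos : ∀ z, 0 < p z)
    (hprob : ∫⁻ z, ENNReal.ofReal (p z) = 1) (z : ℝ) :
    (∫ t in Iic z, p t) ∈ Ioo (0:ℝ) 1 := by
  have hint := dens_integrable hc hpos hprob
  have hsupp : Function.support p = univ := by
    ext x; simp [Function.mem_support, (hpos x).ne']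
  have h1 : 0 < ∫ t in Iic z, p t := by
    rw [setIntegral_pos_iff_support_of_nonneg_ae
      (Eventually.of_forall fun x => (hpos x).le) hint.integrableOn]
    rw [hsupp, univ_inter, Real.volume_Iic]
    exact ENNReal.zero_lt_top
  have h2 : 0 < ∫ t in Ioi z, p t := by
    rw [setIntegral_pos_iff_support_of_nonneg_ae
      (Eventually.of_forall fun x => (hpos x).le) hint.integrableOn]
    rw [hsupp, univ_inter, Real.volume_Ioi]
    exact ENNReal.zero_lt_top
  have h3 : (∫ t in Iic z, p t) + ∫ t in Ioi z, p t = 1 := by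
    rw [intervalIntegral.integral_Iic_add_Ioi hint.integrableOn hint.integrableOn]
    exact dens_total hc hpos hprob
  exact ⟨h1, by linarith⟩

lemma dens_F_deriv (hc : Continuous p) (hpos : ∀ z, 0 < p z)
    (hprob : ∫⁻ z, ENNReal.ofReal (p z) = 1) (z : ℝ) :
    HasStrictDerivAt (fun z => ∫ t in Iic z, p t) (p z) z := by
  have hint := dens_integrable hc hpos hprob
  have heq : (fun z => ∫ t in Iic z, p t)
      = fun z => (∫ t in Iic (0:ℝ), p t) + ∫ t in (0:ℝ)..z, p t := by
    funext z
    rw [← intervalIntegral.integral_Iic_sub_Iic hint.integrableOn hint.integrableOn]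
    ring
  rw [heq]
  exact (intervalIntegral.integral_hasStrictDerivAt_right (hc.intervalIntegrable _ _)
    hc.stronglyMeasurable.stronglyMeasurableAtFilter hc.continuousAt).const_add _

lemma dens_F_tendsto (hc : Continuous p) (hpos : ∀ z, 0 < p z)
    (hprob : ∫⁻ z, ENNReal.ofReal (p z) = 1) :
    Tendsto (fun z => ∫ t in Iic z, p t) atTop (𝓝 1) := by
  have hint := dens_integrable hc hpos hprob
  have h1 : Tendsto (fun z : ℝ => ∫ t in (0:ℝ)..z, p t) atTop
      (𝓝 (∫ t in Ioi (0:ℝ), p t)) :=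
    MeasureTheory.intervalIntegral_tendsto_integral_Ioi 0 hint.integrableOn tendsto_id
  have heq : ∀ z, (∫ t in Iic z, p t)
      = (∫ t in Iic (0:ℝ), p t) + ∫ t in (0:ℝ)..z, p t := by
    intro z
    rw [← intervalIntegral.integral_Iic_sub_Iic hint.integrableOn hint.integrableOn]
    ring
  have h2 : (∫ t in Iic (0:ℝ), p t) + ∫ t in Ioi (0:ℝ), p t = 1 := by
    rw [intervalIntegral.integral_Iic_add_Ioi hint.integrableOn hint.integrableOn]
    exact dens_total hc hpos hprob
  have := (tendsto_const_nhds (x := ∫ t in Iic (0:ℝ), p t) (f := atTop)).add h1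
  rw [h2] at this
  exact this.congr fun z => (heq z).symm

end Aux

/-- Let `p`, `q` be continuous everywhere-positive probability
densities on ℝ with CDFs `F_p`, `F_q`, density quantile functions
`fQ_p(u) = p(F_p⁻¹ u)`, `fQ_q(u) = q(F_q⁻¹ u)`, and `T = F_q⁻¹ ∘ F_p`. Suppose
there are shape parameters `β_p, β_q ∈ [0,1]` and `c_p, c_q ∈ (0,∞)` with
`fQ_p(u) / [(1−u)(log(1/(1−u)))^{1−β_p}] → c_p` and
`fQ_q(u) / [(1−u)(log(1/(1−u)))^{1−β_q}] → c_q` as `u → 1⁻`. Then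
`T'(z)·(log(1/(1−F_p(z))))^{β_p−β_q} → c_p/c_q` as `z → ∞`. -/
theorem slope_asymptotics_shape_parameters
    (p q T Qp Qq : ℝ → ℝ) (βp βq cp cq : ℝ)
    (hp_cont : Continuous p) (hp_pos : ∀ z, 0 < p z)
    (hp_prob : ∫⁻ z, ENNReal.ofReal (p z) = 1)
    (hq_cont : Continuous q) (hq_pos : ∀ x, 0 < q x)
    (hq_prob : ∫⁻ x, ENNReal.ofReal (q x) = 1)
    (hQp : ∀ u ∈ Set.Ioo (0:ℝ) 1, (∫ t in Set.Iic (Qp u), p t) = u)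
    (hQq : ∀ u ∈ Set.Ioo (0:ℝ) 1, (∫ t in Set.Iic (Qq u), q t) = u)
    (hT : ∀ z, (∫ t in Set.Iic (T z), q t) = ∫ t in Set.Iic z, p t)
    (hβp : 0 ≤ βp) (hβp1 : βp ≤ 1) (hβq : 0 ≤ βq) (hβq1 : βq ≤ 1)
    (hcp : 0 < cp) (hcq : 0 < cq)
    (hp_lim : Tendsto
      (fun u => p (Qp u) / ((1 - u) * (Real.log (1 / (1 - u))) ^ (1 - βp)))
      (𝓝[<] (1:ℝ)) (𝓝 cp))
    (hq_lim : Tendsto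
      (fun u => q (Qq u) / ((1 - u) * (Real.log (1 / (1 - u))) ^ (1 - βq)))
      (𝓝[<] (1:ℝ)) (𝓝 cq)) :
    Tendsto
      (fun z => deriv T z *
        (Real.log (1 / (1 - ∫ t in Set.Iic z, p t))) ^ (βp - βq))
      atTop (𝓝 (cp / cq)) := by
  set Fp : ℝ → ℝ := fun z => ∫ t in Iic z, p t with hFp_def
  set Fq : ℝ → ℝ := fun z => ∫ t in Iic z, q t with hFq_def
  have hFp_mono := dens_F_mono hp_cont hp_pos hp_prob
  have hFq_mono := dens_F_mono hq_cont hq_pos hq_prob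
  have hFp_mem := dens_F_mem hp_cont hp_pos hp_prob
  have hFq_mem := dens_F_mem hq_cont hq_pos hq_prob
  have hFp_tendsto := dens_F_tendsto hp_cont hp_pos hp_prob
  -- T z = Qq (Fp z), z = Qp (Fp z)
  have hTz : ∀ z, T z = Qq (Fp z) := by
    intro z
    have h1 : Fq (T z) = Fp z := hT z
    have h2 : Fq (Qq (Fp z)) = Fp z := hQq _ (hFp_mem z)
    exact hFq_mono.injective (h1.trans h2.symm)
  have hQpz : ∀ z, Qp (Fp z) = z := by
    intro z
    have h2 : Fp (Qp (Fp z)) = Fp z := hQp _ (hFp_mem z)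
    exact hFp_mono.injective h2
  -- continuity of Qq on Ioo 0 1
  have hQq_cont : ∀ u ∈ Ioo (0:ℝ) 1, ContinuousAt Qq u := by
    intro u hu
    rw [ContinuousAt]
    refine tendsto_order.2 ⟨?_, ?_⟩
    · intro b hb
      have hw : Fq b < u := by
        rw [← hQq u hu]; exact hFq_mono hb
      filter_upwards [Ioo_mem_nhds hw hu.2] with v hv
      have hv01 : v ∈ Ioo (0:ℝ) 1 := ⟨lt_trans (hFq_mem b).1 hv.1, hv.2⟩
      have : Fq b < Fq (Qq v) := by
        simp only [hFq_def]; rw [hQq v hv01]; exact hv.1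
      exact hFq_mono.lt_iff_lt.mp this
    · intro b hb
      have hw : u < Fq b := by
        rw [← hQq u hu]; exact hFq_mono hb
      filter_upwards [Ioo_mem_nhds hu.1 hw] with v hv
      have hv01 : v ∈ Ioo (0:ℝ) 1 := ⟨hv.1, lt_trans hv.2 (hFq_mem b).2⟩
      have : Fq (Qq v) < Fq b := by
        simp only [hFq_def]; rw [hQq v hv01]; exact hv.2
      exact hFq_mono.lt_iff_lt.mp this
  -- derivative of Qq
  have hQq_deriv : ∀ u ∈ Ioo (0:ℝ) 1, HasDerivAt Qq (q (Qq u))⁻¹ u := by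
    intro u hu
    refine HasDerivAt.of_local_left_inverse (hQq_cont u hu)
      (dens_F_deriv hq_cont hq_pos hq_prob (Qq u)).hasDerivAt
      (hq_pos (Qq u)).ne' ?_
    filter_upwards [Ioo_mem_nhds hu.1 hu.2] with v hv
    exact hQq v hv
  -- derivative of T
  have hT_deriv : ∀ z, HasDerivAt T ((q (T z))⁻¹ * p z) z := by
    intro z
    have h1 : HasDerivAt Fp (p z) z :=
      (dens_F_deriv hp_cont hp_pos hp_prob z).hasDerivAt
    have h2 : HasDerivAt Qq (q (Qq (Fp z)))⁻¹ (Fp z) :=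
      hQq_deriv _ (hFp_mem z)
    have h3 := h2.comp z h1
    have heq : (Qq ∘ Fp) = T := funext fun y => (hTz y).symm
    rw [heq, ← hTz z] at h3
    exact h3
  -- the limit function
  set g : ℝ → ℝ := fun u =>
    (p (Qp u) / ((1 - u) * (Real.log (1 / (1 - u))) ^ (1 - βp))) /
    (q (Qq u) / ((1 - u) * (Real.log (1 / (1 - u))) ^ (1 - βq))) with hg_def
  have hg_lim : Tendsto g (𝓝[<] (1:ℝ)) (𝓝 (cp / cq)) := hp_lim.div hq_lim hcq.ne'
  have hFp_lt : Tendsto Fp atTop (𝓝[<] (1:ℝ)) :=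
    tendsto_nhdsWithin_of_tendsto_nhds_of_eventually_within _ hFp_tendsto
      (Eventually.of_forall fun z => (hFp_mem z).2)
  have hmain : Tendsto (fun z => g (Fp z)) atTop (𝓝 (cp / cq)) :=
    hg_lim.comp hFp_lt
  refine hmain.congr' ?_
  have hev : ∀ᶠ z in atTop, Fp z ∈ Ioo (1/2 : ℝ) 1 := by
    filter_upwards [hFp_tendsto.eventually (eventually_gt_nhds (by norm_num : (1/2:ℝ) < 1))]
      with z hz
    exact ⟨hz, (hFp_mem z).2⟩
  filter_upwards [hev] with z hz
  set u : ℝ := Fp z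
  have hu01 : u ∈ Ioo (0:ℝ) 1 := hFp_mem z
  have h1u : 0 < 1 - u := by linarith [hz.2]
  have hL : 0 < Real.log (1 / (1 - u)) := by
    apply Real.log_pos
    rw [lt_div_iff₀ h1u]
    linarith [hz.1]
  set L : ℝ := Real.log (1 / (1 - u))
  have hLp : (0:ℝ) < L ^ (1 - βp) := Real.rpow_pos_of_pos hL _
  have hLq : (0:ℝ) < L ^ (1 - βq) := Real.rpow_pos_of_pos hL _
  have hrpow : L ^ (βp - βq) = L ^ (1 - βq) / L ^ (1 - βp) := by
    rw [← Real.rpow_sub hL]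
    ring_nf
  have hderiv : deriv T z = (q (T z))⁻¹ * p z := (hT_deriv z).deriv
  have hqT : 0 < q (T z) := hq_pos _
  rw [hg_def]
  simp only
  rw [hQpz z, ← hTz z, hderiv, hrpow]
  field_simp
  have hL' : L = Real.log (1 / (1 - u)) := rfl
  rw [← hL']
  field_simp
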